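/- Let μ be a finite positive Borel measure on ℝ with μ(ℝ∖(−1,1)) = 0, and assume there exist ε ∈ (0,1) and C > 0 such that μ(Δ) ≤ C·λ₁(Δ) for every Borel set Δ contained in {t ∈ (−1,1) : |t| > 1 − ε}, where λ₁ is one-dimensional Lebesgue measure. Then the sequence of monomials (e_k)_{k∈ℕ}, e_k(t) = t^k, is a Bessel sequence in L²(μ). -/

import Mathlib

open MeasureTheory

lemma sum_rsqrt_le (n : ℕ) : ∑ k ∈ Finset.range n, (1:ℝ)/Real.sqrt (k+1) ≤ 2 * Real.sqrt n := by
  induction n with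
  | zero => simp
  | succ n ih =>
    rw [Finset.sum_range_succ]
    have h1 : (1:ℝ)/Real.sqrt (n+1) ≤ 2 * (Real.sqrt (n+1) - Real.sqrt n) := by
      have hs : Real.sqrt n * Real.sqrt (n+1) ≤ (n + (n+1))/2 := by
        nlinarith [Real.sq_sqrt (by positivity : (0:ℝ) ≤ (n:ℝ)),
          Real.sq_sqrt (by positivity : (0:ℝ) ≤ (n:ℝ)+1),
          Real.sqrt_nonneg (n:ℝ), Real.sqrt_nonneg ((n:ℝ)+1),
          sq_nonneg (Real.sqrt n - Real.sqrt (n+1))]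
      have hpos : (0:ℝ) < Real.sqrt (n+1) := Real.sqrt_pos.mpr (by positivity)
      rw [div_le_iff₀ hpos]
      have : Real.sqrt (n+1) * Real.sqrt (n+1) = (n:ℝ)+1 :=
        Real.mul_self_sqrt (by positivity)
      nlinarith
    push_cast
    linarith

lemma sum_pow32_le (j : ℕ) (F : Finset ℕ) :
    ∑ k ∈ F.filter (fun k => j < k), (1:ℝ)/(((k:ℝ)+1) * Real.sqrt (k+1))
      ≤ 2 / Real.sqrt (j+1) := by
  classical
  obtain ⟨N, hN⟩ : ∃ N, ∀ k ∈ F, k < N := ⟨(F.sup id) + 1, fun k hk =>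
    Nat.lt_succ_of_le (Finset.le_sup (f := id) hk)⟩
  have hsub : F.filter (fun k => j < k) ⊆ Finset.Ico (j+1) N := by
    intro k hk
    simp only [Finset.mem_filter] at hk
    exact Finset.mem_Ico.mpr ⟨hk.2, hN k hk.1⟩
  have hmono : ∑ k ∈ F.filter (fun k => j < k), (1:ℝ)/(((k:ℝ)+1) * Real.sqrt (k+1))
      ≤ ∑ k ∈ Finset.Ico (j+1) N, (1:ℝ)/(((k:ℝ)+1) * Real.sqrt (k+1)) :=
    Finset.sum_le_sum_of_subset_of_nonneg hsub (fun k _ _ => by positivity)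
  refine hmono.trans ?_
  have key : ∀ k ∈ Finset.Ico (j+1) N, (1:ℝ)/(((k:ℝ)+1) * Real.sqrt (k+1))
      ≤ 2 * (1/Real.sqrt k - 1/Real.sqrt (k+1)) := by
    intro k hk
    have hk1 : 1 ≤ k := Nat.one_le_iff_ne_zero.mpr (by
      rintro rfl; exact absurd (Finset.mem_Ico.mp hk).1 (by omega))
    have hkpos : (0:ℝ) < Real.sqrt k := Real.sqrt_pos.mpr (by exact_mod_cast hk1)
    have hk1pos : (0:ℝ) < Real.sqrt (k+1) := Real.sqrt_pos.mpr (by positivity)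
    have hsq : Real.sqrt k * Real.sqrt k = (k:ℝ) := Real.mul_self_sqrt (by positivity)
    have hsq1 : Real.sqrt (k+1) * Real.sqrt (k+1) = (k:ℝ)+1 := Real.mul_self_sqrt (by positivity)
    have hle : Real.sqrt k ≤ Real.sqrt (k+1) := Real.sqrt_le_sqrt (by linarith)
    have hd : (Real.sqrt (k+1) - Real.sqrt k)*(Real.sqrt k + Real.sqrt (k+1)) = 1 := by
      linear_combination hsq1 - hsq
    have e : 2*(1/Real.sqrt k - 1/Real.sqrt (k+1))
        = 2*(Real.sqrt (k+1) - Real.sqrt k)/(Real.sqrt k * Real.sqrt (k+1)) := by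
      field_simp
    rw [e, div_le_div_iff₀ (by positivity) (by positivity)]
    nlinarith [hd, hsq, hsq1, hle, hkpos, hk1pos, mul_pos hkpos hk1pos,
      mul_pos hk1pos (mul_pos hk1pos hk1pos), sq_nonneg (Real.sqrt (k+1) - Real.sqrt k)]
  refine (Finset.sum_le_sum key).trans ?_
  have tel : ∑ k ∈ Finset.Ico (j+1) N, 2 * (1/Real.sqrt k - 1/Real.sqrt (k+1))
      ≤ 2 / Real.sqrt (j+1) := by
    rcases le_or_gt N (j+1) with hNle | hNgt
    · rw [Finset.Ico_eq_empty (by omega)]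
      simp
      positivity
    · have := Finset.sum_Ico_eq_sum_range (f := fun k => 2 * (1/Real.sqrt k - 1/Real.sqrt (k+1))) (m := j+1) (n := N)
      rw [this]
      have htel : ∀ m : ℕ, ∑ i ∈ Finset.range m, 2 * (1/Real.sqrt ((j+1) + i) - 1/Real.sqrt ((j+1) + i + 1))
          = 2 * (1/Real.sqrt (j+1) - 1/Real.sqrt ((j+1) + m)) := by
        intro m
        induction m with
        | zero => simp
        | succ m ihm =>
          rw [Finset.sum_range_succ, ihm]
          push_cast
          ring_nf
      push_cast
      rw [htel (N - (j+1))]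
      have : (0:ℝ) ≤ 1/Real.sqrt ((j:ℝ)+1 + (N - (j+1) : ℕ)) := by positivity
      rw [mul_sub, mul_one_div]
      linarith
  exact tel


lemma inner_bound (j : ℕ) (F : Finset ℕ) :
    ∑ k ∈ F, Real.sqrt ((j:ℝ)+1) / (Real.sqrt ((k:ℝ)+1) * ((j:ℝ)+(k:ℝ)+1)) ≤ 4 := by
  classical
  have hsplit : F = F.filter (fun k => k ≤ j) ∪ F.filter (fun k => j < k) := by
    rw [← Finset.filter_or]
    simp [le_or_gt]
  rw [hsplit, Finset.sum_union (by
    apply Finset.disjoint_filter_filter'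
    exact disjoint_iff_inf_le.mpr (fun k hk => absurd hk.2 (not_lt.mpr hk.1)))]
  have h1 : ∑ k ∈ F.filter (fun k => k ≤ j),
      Real.sqrt ((j:ℝ)+1) / (Real.sqrt ((k:ℝ)+1) * ((j:ℝ)+(k:ℝ)+1)) ≤ 2 := by
    have hb : ∀ k ∈ F.filter (fun k => k ≤ j),
        Real.sqrt ((j:ℝ)+1) / (Real.sqrt ((k:ℝ)+1) * ((j:ℝ)+(k:ℝ)+1))
          ≤ 1/(Real.sqrt ((j:ℝ)+1) * Real.sqrt ((k:ℝ)+1)) := by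
      intro k hk
      have hsqj : Real.sqrt ((j:ℝ)+1) * Real.sqrt ((j:ℝ)+1) = (j:ℝ)+1 :=
        Real.mul_self_sqrt (by positivity)
      have h1' : (j:ℝ)+1 ≤ (j:ℝ)+(k:ℝ)+1 := by
        have : (0:ℝ) ≤ (k:ℝ) := by positivity
        linarith
      rw [div_le_div_iff₀ (by positivity) (by positivity)]
      have hkp : (0:ℝ) < Real.sqrt ((k:ℝ)+1) := Real.sqrt_pos.mpr (by positivity)
      nlinarith [Real.sqrt_nonneg ((j:ℝ)+1), Real.sqrt_pos.mpr (show (0:ℝ) < (j:ℝ)+1 by positivity)]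
    refine (Finset.sum_le_sum hb).trans ?_
    have hsub : F.filter (fun k => k ≤ j) ⊆ Finset.range (j+1) := by
      intro k hk; simp only [Finset.mem_filter] at hk
      exact Finset.mem_range.mpr (Nat.lt_succ_of_le hk.2)
    refine le_trans (Finset.sum_le_sum_of_subset_of_nonneg hsub fun k _ _ => by positivity) ?_
    have heq : ∑ k ∈ Finset.range (j+1), 1/(Real.sqrt ((j:ℝ)+1) * Real.sqrt ((k:ℝ)+1))
        = (1/Real.sqrt ((j:ℝ)+1)) * ∑ k ∈ Finset.range (j+1), 1/Real.sqrt ((k:ℝ)+1) := by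
      rw [Finset.mul_sum]
      exact Finset.sum_congr rfl fun k _ => by ring
    rw [heq]
    have hjp : (0:ℝ) < Real.sqrt ((j:ℝ)+1) := Real.sqrt_pos.mpr (by positivity)
    have h2s := sum_rsqrt_le (j+1)
    have hcast : Real.sqrt ((j:ℝ)+1) = Real.sqrt ((j+1 : ℕ) : ℝ) := by push_cast; ring_nf
    calc (1/Real.sqrt ((j:ℝ)+1)) * ∑ k ∈ Finset.range (j+1), 1/Real.sqrt ((k:ℝ)+1)
        ≤ (1/Real.sqrt ((j:ℝ)+1)) * (2 * Real.sqrt ((j+1:ℕ):ℝ)) := by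
          apply mul_le_mul_of_nonneg_left _ (by positivity)
          exact h2s
      _ = 2 := by rw [← hcast]; field_simp
  have h2 : ∑ k ∈ F.filter (fun k => j < k),
      Real.sqrt ((j:ℝ)+1) / (Real.sqrt ((k:ℝ)+1) * ((j:ℝ)+(k:ℝ)+1)) ≤ 2 := by
    have hb : ∀ k ∈ F.filter (fun k => j < k),
        Real.sqrt ((j:ℝ)+1) / (Real.sqrt ((k:ℝ)+1) * ((j:ℝ)+(k:ℝ)+1))
          ≤ Real.sqrt ((j:ℝ)+1) * (1/(((k:ℝ)+1) * Real.sqrt ((k:ℝ)+1))) := by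
      intro k hk
      have h1' : (k:ℝ)+1 ≤ (j:ℝ)+(k:ℝ)+1 := by
        have : (0:ℝ) ≤ (j:ℝ) := by positivity
        linarith
      have hkp : (0:ℝ) < Real.sqrt ((k:ℝ)+1) := Real.sqrt_pos.mpr (by positivity)
      rw [mul_one_div]
      apply div_le_div_of_nonneg_left (Real.sqrt_nonneg _) (by positivity)
      nlinarith [hkp]
    refine (Finset.sum_le_sum hb).trans ?_
    rw [← Finset.mul_sum]
    have := sum_pow32_le j F
    have hjp : (0:ℝ) < Real.sqrt ((j:ℝ)+1) := Real.sqrt_pos.mpr (by positivity)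
    calc Real.sqrt ((j:ℝ)+1) * ∑ k ∈ F.filter (fun k => j < k), (1:ℝ)/(((k:ℝ)+1) * Real.sqrt ((k:ℝ)+1))
        ≤ Real.sqrt ((j:ℝ)+1) * (2 / Real.sqrt ((j:ℝ)+1)) := by
          apply mul_le_mul_of_nonneg_left _ (by positivity)
          convert this using 2 <;> push_cast <;> ring_nf
      _ = 2 := by field_simp
  linarith

lemma hilbert (x : ℕ → ℝ) (hx : ∀ k, 0 ≤ x k) (F : Finset ℕ) :
    ∑ j ∈ F, ∑ k ∈ F, x j * x k / ((j:ℝ) + (k:ℝ) + 1) ≤ 4 * ∑ j ∈ F, x j ^ 2 := by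
  classical
  have key : ∀ j ∈ F, ∀ k ∈ F, x j * x k / ((j:ℝ) + (k:ℝ) + 1)
      ≤ (x j ^ 2 * (Real.sqrt ((j:ℝ)+1) / (Real.sqrt ((k:ℝ)+1) * ((j:ℝ)+(k:ℝ)+1)))
        + x k ^ 2 * (Real.sqrt ((k:ℝ)+1) / (Real.sqrt ((j:ℝ)+1) * ((j:ℝ)+(k:ℝ)+1)))) / 2 := by
    intro j _ k _
    have hjp : (0:ℝ) < Real.sqrt ((j:ℝ)+1) := Real.sqrt_pos.mpr (by positivity)
    have hkp : (0:ℝ) < Real.sqrt ((k:ℝ)+1) := Real.sqrt_pos.mpr (by positivity)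
    have hm : (0:ℝ) < (j:ℝ)+(k:ℝ)+1 := by positivity
    have key2 : 2 * (x j * x k) * (Real.sqrt ((j:ℝ)+1) * Real.sqrt ((k:ℝ)+1))
        ≤ x j ^ 2 * (Real.sqrt ((j:ℝ)+1) * Real.sqrt ((j:ℝ)+1))
          + x k ^ 2 * (Real.sqrt ((k:ℝ)+1) * Real.sqrt ((k:ℝ)+1)) := by
      nlinarith [sq_nonneg (x j * Real.sqrt ((j:ℝ)+1) - x k * Real.sqrt ((k:ℝ)+1)), hx j, hx k]
    have gen : ∀ a b m X Y : ℝ, 0 < a → 0 < b → 0 < m →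
        (X*(a/(b*m)) + Y*(b/(a*m)))/2 = (X*(a*a) + Y*(b*b))/(2*(a*b)*m) := by
      intro a b m X Y ha hb hm'
      field_simp
    have e := gen (Real.sqrt ((j:ℝ)+1)) (Real.sqrt ((k:ℝ)+1)) ((j:ℝ)+(k:ℝ)+1)
      (x j ^ 2) (x k ^ 2) hjp hkp hm
    rw [e, div_le_div_iff₀ (by positivity) (by positivity)]
    nlinarith [mul_le_mul_of_nonneg_right key2 hm.le, hm,
      mul_nonneg (mul_nonneg (mul_nonneg (hx j) (hx k)) (mul_nonneg hjp.le hkp.le)) hm.le]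
  have hu : ∑ j ∈ F, ∑ k ∈ F,
      x j ^ 2 * (Real.sqrt ((j:ℝ)+1) / (Real.sqrt ((k:ℝ)+1) * ((j:ℝ)+(k:ℝ)+1)))
      ≤ 4 * ∑ j ∈ F, x j ^ 2 := by
    calc ∑ j ∈ F, ∑ k ∈ F,
        x j ^ 2 * (Real.sqrt ((j:ℝ)+1) / (Real.sqrt ((k:ℝ)+1) * ((j:ℝ)+(k:ℝ)+1)))
        ≤ ∑ j ∈ F, x j ^ 2 * 4 := by
          apply Finset.sum_le_sum
          intro j _
          rw [← Finset.mul_sum]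
          exact mul_le_mul_of_nonneg_left (inner_bound j F) (sq_nonneg _)
      _ = 4 * ∑ j ∈ F, x j ^ 2 := by rw [← Finset.sum_mul, mul_comm]
  have hv : ∑ j ∈ F, ∑ k ∈ F,
      x k ^ 2 * (Real.sqrt ((k:ℝ)+1) / (Real.sqrt ((j:ℝ)+1) * ((j:ℝ)+(k:ℝ)+1)))
      ≤ 4 * ∑ j ∈ F, x j ^ 2 := by
    rw [Finset.sum_comm]
    refine le_trans (le_of_eq ?_) hu
    apply Finset.sum_congr rfl; intro a _
    apply Finset.sum_congr rfl; intro b _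
    ring_nf
  calc ∑ j ∈ F, ∑ k ∈ F, x j * x k / ((j:ℝ) + (k:ℝ) + 1)
      ≤ ∑ j ∈ F, ∑ k ∈ F,
        (x j ^ 2 * (Real.sqrt ((j:ℝ)+1) / (Real.sqrt ((k:ℝ)+1) * ((j:ℝ)+(k:ℝ)+1)))
          + x k ^ 2 * (Real.sqrt ((k:ℝ)+1) / (Real.sqrt ((j:ℝ)+1) * ((j:ℝ)+(k:ℝ)+1)))) / 2 := by
        apply Finset.sum_le_sum; intro j hj
        apply Finset.sum_le_sum; intro k hk
        exact key j hj k hk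
    _ = ((∑ j ∈ F, ∑ k ∈ F,
          x j ^ 2 * (Real.sqrt ((j:ℝ)+1) / (Real.sqrt ((k:ℝ)+1) * ((j:ℝ)+(k:ℝ)+1))))
        + (∑ j ∈ F, ∑ k ∈ F,
          x k ^ 2 * (Real.sqrt ((k:ℝ)+1) / (Real.sqrt ((j:ℝ)+1) * ((j:ℝ)+(k:ℝ)+1))))) / 2 := by
        simp only [add_div, Finset.sum_add_distrib, ← Finset.sum_div]
    _ ≤ 4 * ∑ j ∈ F, x j ^ 2 := by linarith


lemma geo_bound {r : ℝ} (h0 : 0 ≤ r) (h1 : r < 1) (F : Finset ℕ) :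
    ∑ k ∈ F, r^k ≤ 1/(1-r) := by
  classical
  obtain ⟨N, hN⟩ : ∃ N, ∀ k ∈ F, k < N := ⟨(F.sup id) + 1, fun k hk =>
    Nat.lt_succ_of_le (Finset.le_sup (f := id) hk)⟩
  have hsub : F ⊆ Finset.range N := fun k hk => Finset.mem_range.mpr (hN k hk)
  refine le_trans (Finset.sum_le_sum_of_subset_of_nonneg hsub fun k _ _ => by positivity) ?_
  rw [geom_sum_eq (ne_of_lt h1)]
  have h1r : (0:ℝ) < 1 - r := by linarith
  have e : (r^N - 1)/(r-1) = (1-r^N)/(1-r) := by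
    rw [div_eq_div_iff (by linarith) (by linarith)]; ring
  rw [e, div_le_div_iff₀ h1r h1r]
  have : 0 ≤ r^N := by positivity
  nlinarith

lemma int_pow_Ioo (m : ℕ) (hm : Even m) :
    ∫ t in Set.Ioo (-1:ℝ) 1, t^m = 2/(m+1) := by
  rw [← integral_Ioc_eq_integral_Ioo, ← intervalIntegral.integral_of_le (by norm_num : (-1:ℝ) ≤ 1)]
  rw [integral_pow]
  have : (-1:ℝ)^(m+1) = -1 := Odd.neg_one_pow (Even.add_one hm)
  rw [this, one_pow]
  push_cast
  ring

lemma ratio_bound (m : ℕ) : (2:ℝ)/(2*(m/2 : ℕ)+1) ≤ 4/((m:ℝ)+1) := by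
  have h1 : (m:ℝ)+1 ≤ 4*((m/2 : ℕ):ℝ)+2 := by
    have : m + 1 ≤ 4*(m/2)+2 := by omega
    exact_mod_cast this
  have h2 : (0:ℝ) < 2*((m/2 : ℕ):ℝ)+1 := by positivity
  rw [div_le_div_iff₀ h2 (by positivity)]
  nlinarith


lemma norm_poly_le (c : ℕ → ℂ) (F : Finset ℕ) (t : ℝ) :
    ‖∑ k ∈ F, c k * (t:ℂ)^k‖ ≤ ∑ k ∈ F, ‖c k‖ * |t|^k := by
  refine (norm_sum_le _ _).trans (le_of_eq ?_)
  apply Finset.sum_congr rfl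
  intro k _
  rw [norm_mul, norm_pow, Complex.norm_real, Real.norm_eq_abs]

lemma poly_continuous (c : ℕ → ℂ) (F : Finset ℕ) :
    Continuous (fun t : ℝ => ∑ k ∈ F, c k * (t:ℂ)^k) := by
  apply continuous_finset_sum
  intro k _
  exact continuous_const.mul (Complex.continuous_ofReal.pow k)

lemma embed (μ : Measure ℝ) [IsFiniteMeasure μ] (hμ : μ (Set.Ioo (-1 : ℝ) 1)ᶜ = 0)
    {ε C : ℝ} (hε : ε ∈ Set.Ioo (0 : ℝ) 1) (hC : 0 < C)
    (hcar : ∀ Δ : Set ℝ, MeasurableSet Δ →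
        Δ ⊆ {t : ℝ | t ∈ Set.Ioo (-1 : ℝ) 1 ∧ 1 - ε < |t|} →
        μ Δ ≤ ENNReal.ofReal C * volume Δ)
    (c : ℕ → ℂ) (F : Finset ℕ) :
    ∫ t, ‖∑ k ∈ F, c k * (t:ℂ)^k‖^2 ∂μ
      ≤ ((μ Set.univ).toReal/(1-(1-ε)^2) + 16*C) * ∑ k ∈ F, ‖c k‖^2 := by
  classical
  obtain ⟨hε0, hε1⟩ := hε
  set p : ℝ → ℂ := fun t => ∑ k ∈ F, c k * (t:ℂ)^k with hp
  set f : ℝ → ℝ := fun t => ‖p t‖^2 with hf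
  set S : ℝ := ∑ k ∈ F, ‖c k‖^2 with hS
  have hSnn : 0 ≤ S := Finset.sum_nonneg fun k _ => sq_nonneg _
  set D : Set ℝ := Set.Ioo (-1:ℝ) 1 with hD
  set B : Set ℝ := {t : ℝ | t ∈ D ∧ 1 - ε < |t|} with hB
  set A : Set ℝ := {t : ℝ | t ∈ D ∧ |t| ≤ 1 - ε} with hA
  have hDmeas : MeasurableSet D := measurableSet_Ioo
  have hBmeas : MeasurableSet B := by
    have : B = D ∩ {t : ℝ | 1 - ε < |t|} := rfl
    rw [this]
    exact hDmeas.inter (measurableSet_lt measurable_const continuous_abs.measurable)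
  have hAmeas : MeasurableSet A := by
    have : A = D ∩ {t : ℝ | |t| ≤ 1 - ε} := rfl
    rw [this]
    exact hDmeas.inter (measurableSet_le continuous_abs.measurable measurable_const)
  have hfc : Continuous f := (Continuous.norm (poly_continuous c F)).pow 2
  have hfnn : ∀ t, 0 ≤ f t := fun t => sq_nonneg _
  have haeD : ∀ᵐ t ∂μ, t ∈ D := by
    rw [MeasureTheory.ae_iff]
    exact hμ
  -- global integrability of f wrt μ
  have hfbd : ∀ᵐ t ∂μ, ‖f t‖ ≤ (∑ k ∈ F, ‖c k‖)^2 := by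
    filter_upwards [haeD] with t ht
    rw [Real.norm_of_nonneg (hfnn t), hf]
    have h1 : ‖p t‖ ≤ ∑ k ∈ F, ‖c k‖ := by
      refine (norm_poly_le c F t).trans ?_
      apply Finset.sum_le_sum
      intro k _
      have habs : |t| ≤ 1 := by
        rw [abs_le]; constructor <;> [linarith [ht.1]; linarith [ht.2]]
      calc ‖c k‖ * |t|^k ≤ ‖c k‖ * 1 := by
            apply mul_le_mul_of_nonneg_left _ (norm_nonneg _)
            exact pow_le_one₀ (abs_nonneg t) habs
        _ = ‖c k‖ := mul_one _
    exact pow_le_pow_left₀ (norm_nonneg _) h1 2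
  have hfint : Integrable f μ := by
    rw [← memLp_one_iff_integrable]
    exact MemLp.of_bound hfc.aestronglyMeasurable _ hfbd
  -- decomposition
  have hsplit : ∫ t, f t ∂μ = (∫ t in A, f t ∂μ) + (∫ t in B, f t ∂μ) := by
    have h1 : μ.restrict D = μ := Measure.restrict_eq_self_of_ae_mem haeD
    have h2 : D = A ∪ B := by
      ext t
      simp only [hA, hB, Set.mem_union, Set.mem_setOf_eq]
      constructor
      · intro ht
        rcases le_or_gt (|t|) (1-ε) with h | h
        · exact Or.inl ⟨ht, h⟩
        · exact Or.inr ⟨ht, h⟩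
      · rintro (⟨ht, _⟩ | ⟨ht, _⟩) <;> exact ht
    have hdisj : Disjoint A B := by
      rw [Set.disjoint_left]
      rintro t ⟨_, h1'⟩ ⟨_, h2'⟩
      exact absurd h2' (not_lt.mpr h1')
    calc ∫ t, f t ∂μ = ∫ t in D, f t ∂μ := by rw [h1]
      _ = _ := by
        rw [h2, setIntegral_union hdisj hBmeas (hfint.integrableOn) (hfint.integrableOn)]
  -- Part A
  have hgeo : (0:ℝ) ≤ (1-ε)^2 ∧ (1-ε)^2 < 1 := by
    constructor
    · positivity
    · nlinarith
  have hden : (0:ℝ) < 1 - (1-ε)^2 := by linarith [hgeo.2]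
  have hboundA : ∀ t ∈ A, ‖f t‖ ≤ S / (1 - (1-ε)^2) := by
    intro t ht
    rw [Real.norm_of_nonneg (hfnn t), hf]
    have h1 : ‖p t‖ ≤ ∑ k ∈ F, ‖c k‖ * (1-ε)^k := by
      refine (norm_poly_le c F t).trans ?_
      apply Finset.sum_le_sum
      intro k _
      exact mul_le_mul_of_nonneg_left (pow_le_pow_left₀ (abs_nonneg t) ht.2 k) (norm_nonneg _)
    have h2 : ‖p t‖^2 ≤ (∑ k ∈ F, ‖c k‖ * (1-ε)^k)^2 :=
      pow_le_pow_left₀ (norm_nonneg _) h1 2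
    refine h2.trans ?_
    have h3 := Finset.sum_mul_sq_le_sq_mul_sq F (fun k => ‖c k‖) (fun k => (1-ε)^k)
    refine h3.trans ?_
    have h4 : ∑ k ∈ F, ((1-ε)^k)^2 ≤ 1/(1-(1-ε)^2) := by
      have := geo_bound hgeo.1 hgeo.2 F
      refine le_trans (le_of_eq ?_) this
      apply Finset.sum_congr rfl
      intro k _
      rw [← pow_mul, ← pow_mul, Nat.mul_comm]
    calc (∑ k ∈ F, ‖c k‖^2) * ∑ k ∈ F, ((1-ε)^k)^2
        ≤ S * (1/(1-(1-ε)^2)) := mul_le_mul_of_nonneg_left h4 hSnn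
      _ = S / (1-(1-ε)^2) := by rw [mul_one_div]
  have hpartA : ∫ t in A, f t ∂μ ≤ (μ Set.univ).toReal * (S / (1-(1-ε)^2)) := by
    have hfin : μ A < ⊤ := measure_lt_top μ A
    have := norm_setIntegral_le_of_norm_le_const (μ := μ) (s := A) hfin hboundA
    calc ∫ t in A, f t ∂μ ≤ ‖∫ t in A, f t ∂μ‖ := le_abs_self _
      _ ≤ S / (1-(1-ε)^2) * (μ A).toReal := this
      _ ≤ S / (1-(1-ε)^2) * (μ Set.univ).toReal := by
          apply mul_le_mul_of_nonneg_left _ (by positivity)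
          exact ENNReal.toReal_mono (measure_ne_top μ _) (measure_mono (Set.subset_univ A))
      _ = (μ Set.univ).toReal * (S / (1-(1-ε)^2)) := mul_comm _ _
  -- Part B
  have hpartB : ∫ t in B, f t ∂μ ≤ C * (16 * S) := by
    have hmle : μ.restrict B ≤ (ENNReal.ofReal C) • (volume.restrict B) := by
      refine Measure.le_iff.mpr fun s hs => ?_
      rw [Measure.restrict_apply hs, Measure.smul_apply, Measure.restrict_apply hs, smul_eq_mul]
      exact hcar (s ∩ B) (hs.inter hBmeas) (fun t ht => ht.2)
    have hfintD : IntegrableOn f D volume := by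
      rw [hD]
      exact (hfc.integrableOn_Icc (a := (-1:ℝ)) (b := 1)).mono_set Set.Ioo_subset_Icc_self
    have hfintB : IntegrableOn f B volume := hfintD.mono_set (fun t ht => ht.1)
    have h1 : ∫ t in B, f t ∂μ ≤ ∫ t, f t ∂((ENNReal.ofReal C) • volume.restrict B) :=
      integral_mono_measure hmle (ae_of_all _ hfnn)
        (hfintB.smul_measure ENNReal.ofReal_ne_top)
    have h2 : ∫ t, f t ∂((ENNReal.ofReal C) • volume.restrict B) = C * ∫ t in B, f t := by
      rw [integral_smul_measure, ENNReal.toReal_ofReal hC.le, smul_eq_mul]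
    have h3 : ∫ t in B, f t ≤ ∫ t in D, f t :=
      setIntegral_mono_set hfintD (ae_of_all _ hfnn)
        (HasSubset.Subset.eventuallyLE (fun t ht => ht.1))
    have h4 : ∫ t in D, f t ≤ 16 * S := by
      set q : ℕ → ℕ → ℕ := fun j k => 2*((j+k)/2) with hq
      set hfun : ℝ → ℝ := fun t => ∑ j ∈ F, ∑ k ∈ F, ‖c j‖*‖c k‖ * t^(q j k) with hhfun
      have hhc : Continuous hfun := by
        apply continuous_finset_sum
        intro j _
        apply continuous_finset_sum
        intro k _
        exact continuous_const.mul (continuous_pow _)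
      have hptle : ∀ t ∈ D, f t ≤ hfun t := by
        intro t ht
        have habs : |t| ≤ 1 := by
          rw [abs_le]; constructor <;> [linarith [ht.1]; linarith [ht.2]]
        have h5 : f t ≤ (∑ k ∈ F, ‖c k‖ * |t|^k)^2 :=
          pow_le_pow_left₀ (norm_nonneg _) (norm_poly_le c F t) 2
        refine h5.trans ?_
        rw [sq, Finset.sum_mul_sum]
        apply Finset.sum_le_sum
        intro j _
        apply Finset.sum_le_sum
        intro k _
        have e1 : ‖c j‖ * |t|^j * (‖c k‖ * |t|^k) = ‖c j‖*‖c k‖ * |t|^(j+k) := by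
          rw [pow_add]; ring
        rw [e1]
        apply mul_le_mul_of_nonneg_left _ (by positivity)
        calc |t|^(j+k) ≤ |t|^(q j k) := by
              apply pow_le_pow_of_le_one (abs_nonneg t) habs
              simp only [hq]
              omega
          _ = t^(q j k) := by
              apply Even.pow_abs
              exact even_two_mul _
      have hint1 : ∫ t in D, f t ≤ ∫ t in D, hfun t := by
        apply setIntegral_mono_on hfintD _ hDmeas hptle
        rw [hD]
        exact (hhc.integrableOn_Icc (a := (-1:ℝ)) (b := 1)).mono_set Set.Ioo_subset_Icc_self
      refine hint1.trans ?_
      have hint2 : ∫ t in D, hfun t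
          = ∑ j ∈ F, ∑ k ∈ F, ‖c j‖*‖c k‖ * ∫ t in D, t^(q j k) := by
        rw [hhfun, integral_finset_sum]
        · apply Finset.sum_congr rfl
          intro j _
          rw [integral_finset_sum]
          · exact Finset.sum_congr rfl fun k _ => integral_const_mul _ _
          · intro k _
            rw [hD]
            exact ((continuous_const.mul (continuous_pow _)).integrableOn_Icc
              (a := (-1:ℝ)) (b := 1)).mono_set Set.Ioo_subset_Icc_self
        · intro j _
          apply MeasureTheory.integrable_finset_sum
          intro k _
          rw [hD]
          exact ((continuous_const.mul (continuous_pow _)).integrableOn_Icc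
            (a := (-1:ℝ)) (b := 1)).mono_set Set.Ioo_subset_Icc_self
      rw [hint2]
      have hterm : ∀ j ∈ F, ∀ k ∈ F, ‖c j‖*‖c k‖ * ∫ t in D, t^(q j k)
          ≤ 4 * (‖c j‖*‖c k‖/((j:ℝ)+(k:ℝ)+1)) := by
        intro j _ k _
        rw [hD, int_pow_Ioo (q j k) (even_two_mul _)]
        have hr : (2:ℝ)/((q j k : ℝ)+1) ≤ 4/((j:ℝ)+(k:ℝ)+1) := by
          have := ratio_bound (j+k)
          simp only [hq]
          push_cast at this ⊢
          convert this using 3 <;> push_cast <;> ring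
        calc ‖c j‖*‖c k‖ * (2/((q j k : ℝ)+1))
            ≤ ‖c j‖*‖c k‖ * (4/((j:ℝ)+(k:ℝ)+1)) :=
              mul_le_mul_of_nonneg_left hr (by positivity)
          _ = 4 * (‖c j‖*‖c k‖/((j:ℝ)+(k:ℝ)+1)) := by ring
      calc ∑ j ∈ F, ∑ k ∈ F, ‖c j‖*‖c k‖ * ∫ t in D, t^(q j k)
          ≤ ∑ j ∈ F, ∑ k ∈ F, 4 * (‖c j‖*‖c k‖/((j:ℝ)+(k:ℝ)+1)) := by
            apply Finset.sum_le_sum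
            intro j hj
            exact Finset.sum_le_sum fun k hk => hterm j hj k hk
        _ = 4 * ∑ j ∈ F, ∑ k ∈ F, ‖c j‖*‖c k‖/((j:ℝ)+(k:ℝ)+1) := by
            rw [Finset.mul_sum]
            exact Finset.sum_congr rfl fun j _ => by rw [Finset.mul_sum]
        _ ≤ 4 * (4 * ∑ j ∈ F, ‖c j‖^2) :=
            mul_le_mul_of_nonneg_left
              (hilbert (fun k => ‖c k‖) (fun k => norm_nonneg _) F) (by norm_num)
        _ = 16 * S := by rw [hS]; ring
    calc ∫ t in B, f t ∂μ ≤ C * ∫ t in B, f t := h1.trans (le_of_eq h2)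
      _ ≤ C * ∫ t in D, f t := mul_le_mul_of_nonneg_left h3 hC.le
      _ ≤ C * (16 * S) := mul_le_mul_of_nonneg_left h4 hC.le
  rw [hsplit]
  calc (∫ t in A, f t ∂μ) + (∫ t in B, f t ∂μ)
      ≤ (μ Set.univ).toReal * (S / (1-(1-ε)^2)) + C * (16 * S) := add_le_add hpartA hpartB
    _ = ((μ Set.univ).toReal/(1-(1-ε)^2) + 16*C) * S := by ring


/-- The monomials `(t^k)_{k∈ℕ}` form a Bessel sequence in `L²(μ)` with bound `C`:
`∑_k |⟨g, e_k⟩_{L²(μ)}|² ≤ C‖g‖²_{L²(μ)}` for every `g ∈ L²(μ)`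
(stated via finite partial sums). -/
def MonomialsBesselWithReal (μ : Measure ℝ) (C : ℝ) : Prop :=
  ∀ g : ℝ → ℂ, MemLp g 2 μ → ∀ F : Finset ℕ,
    ∑ k ∈ F, ‖∫ t, g t * (starRingEnd ℂ) ((t : ℂ) ^ k) ∂μ‖ ^ 2 ≤ C * ∫ t, ‖g t‖ ^ 2 ∂μ

theorem stmt_18 (μ : Measure ℝ) [IsFiniteMeasure μ]
    (hμ : μ (Set.Ioo (-1 : ℝ) 1)ᶜ = 0)
    (h : ∃ ε ∈ Set.Ioo (0 : ℝ) 1, ∃ C > 0, ∀ Δ : Set ℝ, MeasurableSet Δ →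
        Δ ⊆ {t : ℝ | t ∈ Set.Ioo (-1 : ℝ) 1 ∧ 1 - ε < |t|} →
        μ Δ ≤ ENNReal.ofReal C * volume Δ) :
    ∃ C > 0, MonomialsBesselWithReal μ C := by
  classical
  obtain ⟨ε, hε, C, hC, hcar⟩ := h
  obtain ⟨hε0, hε1⟩ := hε
  have hden : (0:ℝ) < 1 - (1-ε)^2 := by nlinarith
  set M : ℝ := (μ Set.univ).toReal with hM
  have hMnn : 0 ≤ M := ENNReal.toReal_nonneg
  set K : ℝ := M/(1-(1-ε)^2) + 16*C with hK
  have hKpos : 0 < K := by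
    have h1 : 0 ≤ M/(1-(1-ε)^2) := div_nonneg hMnn hden.le
    rw [hK]
    nlinarith
  refine ⟨K, hKpos, ?_⟩
  intro g hg F
  set c : ℕ → ℂ := fun k => ∫ t, g t * (starRingEnd ℂ) ((t : ℂ) ^ k) ∂μ with hc
  set p : ℝ → ℂ := fun t => ∑ k ∈ F, c k * (t:ℂ)^k with hp
  show ∑ k ∈ F, ‖c k‖^2 ≤ K * ∫ t, ‖g t‖^2 ∂μ
  set S : ℝ := ∑ k ∈ F, ‖c k‖^2 with hS
  have hSnn : 0 ≤ S := Finset.sum_nonneg fun _ _ => sq_nonneg _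
  have haeD : ∀ᵐ t ∂μ, t ∈ Set.Ioo (-1:ℝ) 1 := by
    rw [MeasureTheory.ae_iff]; exact hμ
  have habs1 : ∀ᵐ t ∂μ, |t| ≤ 1 := by
    filter_upwards [haeD] with t ht
    rw [abs_le]; constructor <;> [linarith [ht.1]; linarith [ht.2]]
  have hpm : MemLp p 2 μ := by
    apply MemLp.of_bound (poly_continuous c F).aestronglyMeasurable (∑ k ∈ F, ‖c k‖)
    filter_upwards [habs1] with t ht
    refine (norm_poly_le c F t).trans (Finset.sum_le_sum fun k _ => ?_)
    calc ‖c k‖ * |t|^k ≤ ‖c k‖ * 1 :=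
          mul_le_mul_of_nonneg_left (pow_le_one₀ (abs_nonneg t) ht) (norm_nonneg _)
      _ = ‖c k‖ := mul_one _
  have hqm : MemLp (fun t => (starRingEnd ℂ) (p t)) 2 μ := by
    refine MemLp.of_le hpm
      ((Complex.continuous_conj.comp (poly_continuous c F)).aestronglyMeasurable)
      (ae_of_all _ fun t => ?_)
    rw [RCLike.norm_conj]
  have hone : (1:ENNReal)/1 = 1/2 + 1/(2:ENNReal) := by
    rw [ENNReal.div_add_div_same, one_div_one, one_add_one_eq_two,
      ENNReal.div_self (by norm_num) ENNReal.ofNat_ne_top]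
  have hmul : ∀ q : ℝ → ℂ, MemLp q 2 μ → Integrable (fun t => g t * q t) μ := by
    intro q hq
    rw [← memLp_one_iff_integrable]
    haveI : ENNReal.HolderTriple 2 2 1 := ⟨by rw [inv_one]; exact ENNReal.inv_two_add_inv_two⟩
    have := MemLp.smul (𝕜 := ℂ) (r := 1) hq hg
    convert this using 1
    rfl
  have hintk : ∀ k : ℕ, Integrable (fun t => g t * (starRingEnd ℂ) ((t:ℂ)^k)) μ := by
    intro k
    apply hmul
    apply MemLp.of_bound
      ((Complex.continuous_conj.comp (Complex.continuous_ofReal.pow k)).aestronglyMeasurable) 1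
    filter_upwards [habs1] with t ht
    simp only [Function.comp_apply, Pi.pow_apply]
    rw [RCLike.norm_conj, norm_pow, Complex.norm_real, Real.norm_eq_abs]
    exact pow_le_one₀ (abs_nonneg t) ht
  have key1 : ∫ t, g t * (starRingEnd ℂ) (p t) ∂μ = (S : ℂ) := by
    have e1 : ∀ t : ℝ, g t * (starRingEnd ℂ) (p t)
        = ∑ k ∈ F, (starRingEnd ℂ) (c k) * (g t * (starRingEnd ℂ) ((t:ℂ)^k)) := by
      intro t
      rw [hp]
      simp only [map_sum, map_mul, Finset.mul_sum]
      exact Finset.sum_congr rfl fun k _ => by ring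
    calc ∫ t, g t * (starRingEnd ℂ) (p t) ∂μ
        = ∫ t, ∑ k ∈ F, (starRingEnd ℂ) (c k) * (g t * (starRingEnd ℂ) ((t:ℂ)^k)) ∂μ := by
          exact integral_congr_ae (ae_of_all _ e1)
      _ = ∑ k ∈ F, (starRingEnd ℂ) (c k)
            * ∫ t, g t * (starRingEnd ℂ) ((t:ℂ)^k) ∂μ := by
          rw [integral_finset_sum F (fun k _ => (hintk k).const_mul _)]
          exact Finset.sum_congr rfl fun k _ => integral_const_mul _ _
      _ = ∑ k ∈ F, (starRingEnd ℂ) (c k) * c k := rfl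
      _ = (S : ℂ) := by
          rw [hS]
          push_cast
          refine Finset.sum_congr rfl fun k _ => ?_
          rw [mul_comm, Complex.mul_conj]
          norm_cast
          rw [Complex.normSq_eq_norm_sq]
  have key2 : S ≤ ∫ t, ‖g t‖ * ‖p t‖ ∂μ := by
    have h1 : S = (∫ t, g t * (starRingEnd ℂ) (p t) ∂μ).re := by rw [key1]; simp
    rw [h1]
    refine (Complex.re_le_norm _).trans ?_
    refine (norm_integral_le_integral_norm _).trans (le_of_eq ?_)
    refine integral_congr_ae (ae_of_all _ fun t => ?_)
    simp only []
    rw [norm_mul, RCLike.norm_conj]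
  have hconj : Real.HolderConjugate 2 2 := Real.HolderConjugate.two_two
  have h2e : (2:ENNReal) = ENNReal.ofReal (2:ℝ) := by
    rw [ENNReal.ofReal_ofNat]
  have hg2 : MemLp g (ENNReal.ofReal (2:ℝ)) μ := by rw [← h2e]; exact hg
  have hpm2 : MemLp p (ENNReal.ofReal (2:ℝ)) μ := by rw [← h2e]; exact hpm
  have hold := integral_mul_norm_le_Lp_mul_Lq (μ := μ) hconj hg2 hpm2
  have e2 : ∀ x : ℝ, 0 ≤ x → x^(2:ℝ) = x^2 := by
    intro x hx
    rw [show (2:ℝ) = ((2:ℕ):ℝ) by norm_num, Real.rpow_natCast]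
  set G : ℝ := ∫ t, ‖g t‖^2 ∂μ with hG
  set P : ℝ := ∫ t, ‖p t‖^2 ∂μ with hP
  have hGnn : 0 ≤ G := integral_nonneg fun t => sq_nonneg _
  have hPnn : 0 ≤ P := integral_nonneg fun t => sq_nonneg _
  have hgr : ∫ t, ‖g t‖^(2:ℝ) ∂μ = G :=
    integral_congr_ae (ae_of_all _ fun t => e2 _ (norm_nonneg _))
  have hpr : ∫ t, ‖p t‖^(2:ℝ) ∂μ = P :=
    integral_congr_ae (ae_of_all _ fun t => e2 _ (norm_nonneg _))
  rw [hgr, hpr] at hold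
  have hPle : P ≤ K * S := by
    rw [hP, hK, hp, hM]
    exact embed μ hμ ⟨hε0, hε1⟩ hC hcar c F
  have hrs : ∀ x : ℝ, 0 ≤ x → x^((1:ℝ)/2) = Real.sqrt x := by
    intro x hx
    rw [Real.sqrt_eq_rpow]
  have hfin : S ≤ Real.sqrt G * Real.sqrt (K * S) := by
    have := key2.trans hold
    rw [hrs _ hGnn, hrs _ hPnn] at this
    refine this.trans ?_
    exact mul_le_mul_of_nonneg_left (Real.sqrt_le_sqrt hPle) (Real.sqrt_nonneg _)
  have hsq : S^2 ≤ G * (K * S) := by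
    have hGs : Real.sqrt G ^ 2 = G := Real.sq_sqrt hGnn
    have hKs : Real.sqrt (K * S) ^ 2 = K * S := Real.sq_sqrt (mul_nonneg hKpos.le hSnn)
    nlinarith [Real.sqrt_nonneg G, Real.sqrt_nonneg (K * S), hSnn, hfin]
  rcases eq_or_lt_of_le hSnn with h0 | h0
  · rw [← h0]
    positivity
  · nlinarith [hsq, h0, hKpos, hGnn]
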